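/- The vector π_r(M) with components π_{x(r)}(M) = g_{M,n}(p(x)) / Σ_{x' ∈ S} g_{M,n}(p(x')) is a stationary probability distribution for the Markov transition kernel K_r of the relaxed stochastic ruler method; that is, Σ_{x ∈ S} π_{x(r)}(M) = 1 and Σ_{x ∈ S} π_{x(r)}(M) · K_r(x, x') = π_{x'(r)}(M) for every x' ∈ S. -/

import Mathlib

open Finset

/-- Relaxed acceptance probability
`g_{M,n}(q) = Σ_{t=n}^{M} C(t−1, t−n) · q^n · (1−q)^{t−n}`. -/
noncomputable def relaxedAccept (M n : ℕ) (q : ℝ) : ℝ :=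
  ∑ t ∈ Finset.Icc n M, ((t - 1).choose (t - n) : ℝ) * q ^ n * (1 - q) ^ (t - n)

lemma relaxedAccept_pos (M n : ℕ) (hnM : n ≤ M) (q : ℝ) (h0 : 0 < q) (h1 : q < 1) :
    0 < relaxedAccept M n q := by
  unfold relaxedAccept
  apply Finset.sum_pos'
  · intro t _
    have h1' : (0:ℝ) ≤ 1 - q := by linarith
    have := h0.le
    positivity
  · refine ⟨n, Finset.mem_Icc.mpr ⟨le_refl n, hnM⟩, ?_⟩
    simp [Nat.sub_self]
    positivity

/-- The vector `π_r(M)` with components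
`π_{x(r)}(M) = g_{M,n}(p(x)) / Σ_{x'} g_{M,n}(p(x'))`, `n = ⌈αM⌉`, is a stationary
probability distribution for the transition kernel `K_r` of the relaxed stochastic
ruler method. -/
theorem relaxed_stochastic_ruler_stationary
    {S : Type*} [Fintype S] [Nonempty S] [DecidableEq S]
    (R : S → S → ℝ)
    (hRnonneg : ∀ x x', 0 ≤ R x x')
    (hRsymm : ∀ x x', R x x' = R x' x)
    (hRdiag : ∀ x, R x x = 0)
    (hRsum : ∀ x, ∑ x', R x x' = 1)
    (p : S → ℝ) (hp : ∀ x, 0 < p x ∧ p x < 1)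
    (α : ℝ) (hα : 0 < α ∧ α < 1)
    (M : ℕ) (hM : 0 < M)
    (n : ℕ) (hn : n = ⌈α * M⌉₊)
    (Kr : S → S → ℝ)
    (hKoff : ∀ x x', x' ≠ x → Kr x x' = R x x' * relaxedAccept M n (p x'))
    (hKdiag : ∀ x, Kr x x = 1 - ∑ y ∈ univ.erase x, R x y * relaxedAccept M n (p y))
    (πr : S → ℝ)
    (hπr : ∀ x, πr x = relaxedAccept M n (p x) / ∑ x', relaxedAccept M n (p x')) :
    (∑ x, πr x = 1) ∧ (∀ x', ∑ x, πr x * Kr x x' = πr x') := by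
  have hnM : n ≤ M := by
    rw [hn, Nat.ceil_le]
    calc α * M ≤ 1 * M := by
          apply mul_le_mul_of_nonneg_right hα.2.le (Nat.cast_nonneg M)
      _ = M := one_mul _
  set g : S → ℝ := fun x => relaxedAccept M n (p x) with hg
  have hgpos : ∀ x, 0 < g x := fun x =>
    relaxedAccept_pos M n hnM (p x) (hp x).1 (hp x).2
  set Z : ℝ := ∑ x', g x' with hZ
  have hZpos : 0 < Z := Finset.sum_pos (fun x _ => hgpos x) univ_nonempty
  have hsum1 : ∑ x, πr x = 1 := by
    simp only [hπr, ← Finset.sum_div]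
    exact div_self hZpos.ne'
  refine ⟨hsum1, fun x' => ?_⟩
  have hsplit : ∑ x, πr x * Kr x x' =
      πr x' * Kr x' x' + ∑ x ∈ univ.erase x', πr x * Kr x x' :=
    (Finset.add_sum_erase univ (fun x => πr x * Kr x x') (mem_univ x')).symm
  have hterm : ∀ x ∈ univ.erase x', πr x * Kr x x' = πr x' * (R x' x * g x) := by
    intro x hx
    have hne : x ≠ x' := (Finset.mem_erase.mp hx).1
    rw [hKoff x x' hne.symm, hπr x, hπr x', hRsymm]
    field_simp
    ring
  rw [hsplit, Finset.sum_congr rfl hterm, ← Finset.mul_sum, ← mul_add, hKdiag x']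
  ring_nf
  simp only [hg]; ring
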